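/- arXiv:0803.2778 — 6 statements merged into one kernel-verified Lean document; each statement's English description precedes it below -/
import Mathlib

section
/- Let n ∈ ℕ and let σ₁, σ₂, S be the (n+1)×(n+1) integer matrices with entries σ₁_{km} = binom(n-k, n-m), σ₂_{km} = (-1)^{k+m}·binom(k, m), and S_{km} = (-1)^k if k+m = n and S_{km} = 0 otherwise. Then σ₁·σ₂·σ₁ = σ₂·σ₁·σ₂ = S. -/
open Finset

private lemma neg_one_pow_congr_mod2 (a b : ℕ) (h : a % 2 = b % 2) : ((-1 : ℤ)) ^ a = (-1) ^ b := by
  conv_lhs => rw [← Nat.div_add_mod a 2]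
  conv_rhs => rw [← Nat.div_add_mod b 2]
  rw [pow_add, pow_add, pow_mul, pow_mul, h]
  norm_num

private lemma choose_mul_choose (N m i : ℕ) :
    (N.choose (m + i)) * ((m + i).choose m) = N.choose m * (N - m).choose i := by
  rcases le_or_gt (m + i) N with h | h
  · rw [Nat.choose_mul (Nat.le_add_right m i), Nat.add_sub_cancel_left]
  · rw [Nat.choose_eq_zero_of_lt h, Nat.zero_mul]
    rcases le_or_gt m N with hm | hm
    · rw [Nat.choose_eq_zero_of_lt (by omega : N - m < i), Nat.mul_zero]
    · rw [Nat.choose_eq_zero_of_lt hm, Nat.zero_mul]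

/-- `∑ j (-1)^j C(N,j) C(j,m) = (-1)^N [m = N]` when sum range covers everything. -/
private lemma L1 (n N m : ℕ) (hN : N ≤ n) :
    ∑ j ∈ range (n + 1), (-1 : ℤ) ^ j * (N.choose j) * (j.choose m) =
      if m = N then (-1) ^ N else 0 := by
  rcases le_or_gt m n with hm | hm
  · have hsplit : n + 1 = m + (n + 1 - m) := by omega
    rw [hsplit, Finset.sum_range_add]
    have h1 : ∑ j ∈ range m, (-1 : ℤ) ^ j * (N.choose j) * (j.choose m) = 0 := by
      apply Finset.sum_eq_zero
      intro j hj
      rw [Finset.mem_range] at hj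
      rw [Nat.choose_eq_zero_of_lt hj]
      simp
    rw [h1, zero_add]
    have h2 : ∀ i ∈ range (n + 1 - m),
        (-1 : ℤ) ^ (m + i) * (N.choose (m + i)) * ((m + i).choose m)
          = (-1) ^ m * (N.choose m) * ((-1) ^ i * ((N - m).choose i)) := by
      intro i _
      have := choose_mul_choose N m i
      have hc : ((N.choose (m + i) : ℤ)) * ((m + i).choose m)
          = (N.choose m : ℤ) * ((N - m).choose i) := by exact_mod_cast congrArg (Nat.cast (R := ℤ)) this
      rw [pow_add]
      calc (-1 : ℤ) ^ m * (-1) ^ i * (N.choose (m + i)) * ((m + i).choose m)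
          = (-1 : ℤ) ^ m * (-1) ^ i * ((N.choose (m + i) : ℤ) * ((m + i).choose m)) := by ring
        _ = (-1 : ℤ) ^ m * (-1) ^ i * ((N.choose m : ℤ) * ((N - m).choose i)) := by rw [hc]
        _ = (-1) ^ m * (N.choose m) * ((-1) ^ i * ((N - m).choose i)) := by ring
    rw [Finset.sum_congr rfl h2, ← Finset.mul_sum]
    rcases le_or_gt m N with hmN | hmN
    · have hsub : range (N - m + 1) ⊆ range (n + 1 - m) := by
        apply Finset.range_subset_range.2; omega
      have hzero : ∀ x ∈ range (n + 1 - m), x ∉ range (N - m + 1) →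
          (-1 : ℤ) ^ x * ((N - m).choose x) = 0 := by
        intro x _ hx
        rw [Finset.mem_range, not_lt] at hx
        rw [Nat.choose_eq_zero_of_lt (by omega)]
        simp
      rw [← Finset.sum_subset hsub hzero, Int.alternating_sum_range_choose]
      rcases eq_or_ne m N with rfl | hne
      · simp
      · have : N - m ≠ 0 := by omega
        simp [this, hne, Ne.symm hne]
    · rw [Nat.choose_eq_zero_of_lt hmN]
      have : m ≠ N := by omega
      simp [this]
  · have h1 : ∑ j ∈ range (n + 1), (-1 : ℤ) ^ j * (N.choose j) * (j.choose m) = 0 := by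
      apply Finset.sum_eq_zero
      intro j hj
      rw [Finset.mem_range] at hj
      rw [Nat.choose_eq_zero_of_lt (by omega : j < m)]
      simp
    have : m ≠ N := by omega
    rw [h1, if_neg this]

/-- `∑ j (-1)^j C(k,j) C(N-j,r) = [k ≤ r] C(N-k, r-k)` for `k ≤ N`. -/
private lemma L2' : ∀ k : ℕ, ∀ N r : ℕ, k ≤ N →
    ∑ j ∈ range (k + 1), (-1 : ℤ) ^ j * (k.choose j) * ((N - j).choose r) =
      if k ≤ r then (((N - k).choose (r - k) : ℕ) : ℤ) else 0 := by
  intro k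
  induction k with
  | zero =>
    intro N r _
    simp
  | succ k ih =>
    intro N r hN
    have hkN : k ≤ N - 1 := by omega
    have hA := ih (N - 1) r hkN
    have hA2 := ih N r (by omega)
    -- the sum over range (k+2) of the k-indexed summand equals sum over range (k+1)
    have hext : ∑ j ∈ range (k + 2), (-1 : ℤ) ^ j * (k.choose j) * ((N - j).choose r)
        = ∑ j ∈ range (k + 1), (-1 : ℤ) ^ j * (k.choose j) * ((N - j).choose r) := by
      rw [Finset.sum_range_succ, Nat.choose_eq_zero_of_lt (by omega : k < k + 1)]
      simp
    -- peel off the first term of the extended sum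
    have hpeel : ∑ j ∈ range (k + 2), (-1 : ℤ) ^ j * (k.choose j) * ((N - j).choose r)
        = (∑ i ∈ range (k + 1), (-1 : ℤ) ^ (i + 1) * (k.choose (i + 1)) * ((N - 1 - i).choose r))
          + (N.choose r : ℤ) := by
      rw [Finset.sum_range_succ' (fun j => (-1 : ℤ) ^ j * (k.choose j) * ((N - j).choose r)) (k + 1)]
      congr 1
      · apply Finset.sum_congr rfl
        intro i _
        have : N - (i + 1) = N - 1 - i := by omega
        rw [this]
      · simp
    -- value of B' := ∑ i (-1)^i C(k,i+1) C(N-1-i,r)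
    have hB' : ∑ i ∈ range (k + 1), (-1 : ℤ) ^ i * (k.choose (i + 1)) * ((N - 1 - i).choose r)
        = (N.choose r : ℤ) - (if k ≤ r then (((N - k).choose (r - k) : ℕ) : ℤ) else 0) := by
      have h1 : ∑ i ∈ range (k + 1), (-1 : ℤ) ^ (i + 1) * (k.choose (i + 1)) * ((N - 1 - i).choose r)
          = -∑ i ∈ range (k + 1), (-1 : ℤ) ^ i * (k.choose (i + 1)) * ((N - 1 - i).choose r) := by
        rw [← Finset.sum_neg_distrib]
        apply Finset.sum_congr rfl
        intro i _
        rw [pow_succ]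
        ring
      have := hpeel
      rw [hext, hA2, h1] at this
      linarith [this]
    -- main computation
    rw [Finset.sum_range_succ' (fun j => (-1 : ℤ) ^ j * ((k + 1).choose j) * ((N - j).choose r)) (k + 1)]
    have hterm : ∀ i ∈ range (k + 1),
        (-1 : ℤ) ^ (i + 1) * ((k + 1).choose (i + 1)) * ((N - (i + 1)).choose r)
          = -((-1 : ℤ) ^ i * (k.choose i) * ((N - 1 - i).choose r))
            - ((-1 : ℤ) ^ i * (k.choose (i + 1)) * ((N - 1 - i).choose r)) := by
      intro i _
      have h1 : N - (i + 1) = N - 1 - i := by omega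
      rw [h1, Nat.choose_succ_succ, pow_succ]
      push_cast
      ring
    rw [Finset.sum_congr rfl hterm, Finset.sum_sub_distrib, Finset.sum_neg_distrib, hA, hB']
    simp only [Nat.choose_zero_right, pow_zero, Nat.sub_zero, Nat.cast_one, one_mul, mul_one]
    -- goal: -(A) - (C(N,r) - A2) + C(N,r) = RHS, i.e. A2 - A = RHS
    rcases le_or_gt (k + 1) r with hr | hr
    · have hkr : k ≤ r := by omega
      rw [if_pos hkr, if_pos hkr, if_pos hr]
      have e1 : N - k = (N - 1 - k) + 1 := by omega
      have e2 : r - k = (r - (k + 1)) + 1 := by omega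
      have e3 : N - (k + 1) = N - 1 - k := by omega
      rw [e1, e2, e3, Nat.choose_succ_succ]
      push_cast
      ring
    · rcases le_or_gt k r with hkr | hkr
      · have : r = k := by omega
        subst this
        rw [if_pos le_rfl, if_pos le_rfl, if_neg (by omega)]
        simp only [Nat.sub_self, Nat.choose_zero_right, Nat.cast_one]
        ring
      · rw [if_neg (by omega), if_neg (by omega), if_neg (by omega)]
        ring

private lemma L2 (n k m : ℕ) (hk : k ≤ n) (hm : m ≤ n) :
    ∑ j ∈ range (n + 1), (-1 : ℤ) ^ j * (k.choose j) * ((n - j).choose (n - m)) =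
      (((n - k).choose m : ℕ) : ℤ) := by
  have hsub : range (k + 1) ⊆ range (n + 1) := Finset.range_subset_range.2 (by omega)
  have hzero : ∀ x ∈ range (n + 1), x ∉ range (k + 1) →
      (-1 : ℤ) ^ x * (k.choose x) * ((n - x).choose (n - m)) = 0 := by
    intro x _ hx
    rw [Finset.mem_range, not_lt] at hx
    rw [Nat.choose_eq_zero_of_lt (by omega : k < x)]
    simp
  rw [← Finset.sum_subset hsub hzero, L2' k n (n - m) hk]
  rcases le_or_gt (k + m) n with h | h
  · rw [if_pos (by omega : k ≤ n - m)]
    have e : n - m - k = (n - k) - m := by omega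
    rw [e, Nat.choose_symm (by omega : m ≤ n - k)]
  · rw [if_neg (by omega : ¬ k ≤ n - m), Nat.choose_eq_zero_of_lt (by omega : n - k < m)]
    simp

/-- For the `(n+1)×(n+1)` integer matrices with entries
`σ₁_{km} = binom(n-k, n-m)`, `σ₂_{km} = (-1)^{k+m} binom(k,m)`, and
`S_{km} = (-1)^k` if `k+m = n` and `0` otherwise, we have `σ₁ σ₂ σ₁ = σ₂ σ₁ σ₂ = S`. -/
theorem braid_relation_pascal (n : ℕ)
    (σ1 σ2 S : Matrix (Fin (n + 1)) (Fin (n + 1)) ℤ)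
    (hσ1 : ∀ k m : Fin (n + 1), σ1 k m = (Nat.choose (n - k.val) (n - m.val) : ℤ))
    (hσ2 : ∀ k m : Fin (n + 1), σ2 k m = (-1) ^ (k.val + m.val) * (Nat.choose k.val m.val : ℤ))
    (hS : ∀ k m : Fin (n + 1), S k m = if k.val + m.val = n then (-1) ^ k.val else 0) :
    σ1 * σ2 * σ1 = S ∧ σ2 * σ1 * σ2 = S := by
  have hkle : ∀ k : Fin (n + 1), (k : ℕ) ≤ n := fun k => Nat.lt_succ_iff.1 k.isLt
  -- entries of σ2 * σ1
  have hT : ∀ k m : Fin (n + 1), (σ2 * σ1) k m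
      = (-1) ^ (k : ℕ) * (((n - (k : ℕ)).choose (m : ℕ) : ℕ) : ℤ) := by
    intro k m
    rw [Matrix.mul_apply]
    have h1 : ∀ j : Fin (n + 1), σ2 k j * σ1 j m
        = (fun j : ℕ => (-1 : ℤ) ^ (k : ℕ) *
            ((-1 : ℤ) ^ j * ((k : ℕ).choose j) * ((n - j).choose (n - (m : ℕ))))) (j : ℕ) := by
      intro j
      rw [hσ2, hσ1, pow_add]
      ring
    rw [Finset.sum_congr rfl (fun j _ => h1 j),
      Fin.sum_univ_eq_sum_range (fun j : ℕ => (-1 : ℤ) ^ (k : ℕ) *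
        ((-1 : ℤ) ^ j * ((k : ℕ).choose j) * ((n - j).choose (n - (m : ℕ))))) (n + 1),
      ← Finset.mul_sum, L2 n k m (hkle k) (hkle m)]
  -- entries of σ1 * σ2
  have hU : ∀ k m : Fin (n + 1), (σ1 * σ2) k m
      = (-1) ^ (n + (m : ℕ)) * (((k : ℕ).choose (n - (m : ℕ)) : ℕ) : ℤ) := by
    intro k m
    rw [Matrix.mul_apply]
    have h1 : ∀ j : Fin (n + 1), σ1 k j * σ2 j m
        = (fun j : ℕ => ((n - (k : ℕ)).choose (n - j) : ℤ) *
            ((-1 : ℤ) ^ (j + (m : ℕ)) * (j.choose (m : ℕ)))) (j : ℕ) := by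
      intro j
      rw [hσ1, hσ2]
    rw [Finset.sum_congr rfl (fun j _ => h1 j),
      Fin.sum_univ_eq_sum_range (fun j : ℕ => ((n - (k : ℕ)).choose (n - j) : ℤ) *
        ((-1 : ℤ) ^ (j + (m : ℕ)) * (j.choose (m : ℕ)))) (n + 1),
      ← Finset.sum_range_reflect]
    have h2 : ∀ j ∈ range (n + 1),
        ((n - (k : ℕ)).choose (n - (n + 1 - 1 - j)) : ℤ) *
          ((-1 : ℤ) ^ ((n + 1 - 1 - j) + (m : ℕ)) * ((n + 1 - 1 - j).choose (m : ℕ)))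
        = (-1 : ℤ) ^ (n + (m : ℕ)) *
            ((-1 : ℤ) ^ j * ((n - (k : ℕ)).choose j) * ((n - j).choose (n - (n - (m : ℕ))))) := by
      intro j hj
      rw [Finset.mem_range] at hj
      have e1 : n + 1 - 1 - j = n - j := by omega
      have e2 : n - (n - j) = j := by omega
      have e3 : n - (n - (m : ℕ)) = (m : ℕ) := by omega
      rw [e1, e2, e3]
      have e4 : (-1 : ℤ) ^ ((n - j) + (m : ℕ)) = (-1) ^ (n + (m : ℕ)) * (-1) ^ j := by
        rw [← pow_add]
        exact neg_one_pow_congr_mod2 _ _ (by omega)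
      rw [e4]
      ring
    rw [Finset.sum_congr rfl h2, ← Finset.mul_sum,
      L2 n (n - (k : ℕ)) (n - (m : ℕ)) (by omega) (by omega)]
    have e5 : n - (n - (k : ℕ)) = (k : ℕ) := by have := hkle k; omega
    rw [e5]
  -- σ2 * σ1 * σ2 = S
  have hright : σ2 * σ1 * σ2 = S := by
    ext k m
    rw [Matrix.mul_apply]
    have h1 : ∀ j : Fin (n + 1), (σ2 * σ1) k j * σ2 j m
        = (fun j : ℕ => (-1 : ℤ) ^ ((k : ℕ) + (m : ℕ)) *
            ((-1 : ℤ) ^ j * ((n - (k : ℕ)).choose j) * (j.choose (m : ℕ)))) (j : ℕ) := by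
      intro j
      rw [hT, hσ2, pow_add]
      ring
    rw [Finset.sum_congr rfl (fun j _ => h1 j),
      Fin.sum_univ_eq_sum_range (fun j : ℕ => (-1 : ℤ) ^ ((k : ℕ) + (m : ℕ)) *
        ((-1 : ℤ) ^ j * ((n - (k : ℕ)).choose j) * (j.choose (m : ℕ)))) (n + 1),
      ← Finset.mul_sum, L1 n (n - (k : ℕ)) (m : ℕ) (by omega), hS]
    rcases eq_or_ne ((k : ℕ) + (m : ℕ)) n with h | h
    · rw [if_pos (by omega : (m : ℕ) = n - (k : ℕ)), if_pos h, ← pow_add]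
      exact neg_one_pow_congr_mod2 _ _ (by omega)
    · rw [if_neg (by have := hkle k; omega : ¬ (m : ℕ) = n - (k : ℕ)), if_neg h, mul_zero]
  -- σ1 * σ2 * σ1 = S
  have hleft : σ1 * σ2 * σ1 = S := by
    ext k m
    rw [Matrix.mul_apply]
    have h1 : ∀ j : Fin (n + 1), (σ1 * σ2) k j * σ1 j m
        = (fun j : ℕ => (-1 : ℤ) ^ (n + j) * ((k : ℕ).choose (n - j) : ℤ) *
            ((n - j).choose (n - (m : ℕ)) : ℤ)) (j : ℕ) := by
      intro j
      rw [hU, hσ1]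
    rw [Finset.sum_congr rfl (fun j _ => h1 j),
      Fin.sum_univ_eq_sum_range (fun j : ℕ => (-1 : ℤ) ^ (n + j) * ((k : ℕ).choose (n - j) : ℤ) *
        ((n - j).choose (n - (m : ℕ)) : ℤ)) (n + 1),
      ← Finset.sum_range_reflect]
    have h2 : ∀ j ∈ range (n + 1),
        (-1 : ℤ) ^ (n + (n + 1 - 1 - j)) * ((k : ℕ).choose (n - (n + 1 - 1 - j)) : ℤ) *
          ((n - (n + 1 - 1 - j)).choose (n - (m : ℕ)) : ℤ)
        = (-1 : ℤ) ^ j * (((k : ℕ).choose j : ℕ) : ℤ) * ((j.choose (n - (m : ℕ)) : ℕ) : ℤ) := by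
      intro j hj
      rw [Finset.mem_range] at hj
      have e1 : n + 1 - 1 - j = n - j := by omega
      have e2 : n - (n - j) = j := by omega
      rw [e1, e2, neg_one_pow_congr_mod2 (n + (n - j)) j (by omega)]
    rw [Finset.sum_congr rfl h2, L1 n (k : ℕ) (n - (m : ℕ)) (hkle k), hS]
    rcases eq_or_ne ((k : ℕ) + (m : ℕ)) n with h | h
    · rw [if_pos (by have := hkle m; omega : n - (m : ℕ) = (k : ℕ)), if_pos h]
    · rw [if_neg (by have := hkle m; omega : ¬ n - (m : ℕ) = (k : ℕ)), if_neg h]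
  exact ⟨hleft, hright⟩
end

section
/- Let n ∈ ℕ and let T be the (n+1)×(n+1) complex matrix with entries T_{k,k+1} = k+1 for 0 ≤ k ≤ n-1 and all other entries 0. Then the matrix exponential exp(T) has entries (exp T)_{km} = binom(m, k) for all k, m ∈ {0,…,n} (in particular (exp T)_{km} = 0 for k > m). -/
/-- If `T` is the `(n+1)×(n+1)` complex matrix with `T_{k,k+1} = k+1`
for `0 ≤ k ≤ n-1` and all other entries `0`, then the matrix exponential of `T` has
entries `(exp T)_{km} = binom(m,k)`. -/
theorem exp_superdiagonal_eq_pascal (n : ℕ)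
    (T : Matrix (Fin (n + 1)) (Fin (n + 1)) ℂ)
    (hT : ∀ k m : Fin (n + 1), T k m = if m.val = k.val + 1 then ((k.val : ℂ) + 1) else 0) :
    ∀ k m : Fin (n + 1), NormedSpace.exp T k m = (Nat.choose m.val k.val : ℂ) := by
  -- powers of T
  have hpow : ∀ j : ℕ, ∀ k m : Fin (n + 1),
      (T ^ j) k m = if m.val = k.val + j then
        ((j.factorial * Nat.choose m.val k.val : ℕ) : ℂ) else 0 := by
    intro j
    induction j with
    | zero =>
      intro k m
      simp only [pow_zero, Matrix.one_apply, Nat.add_zero, Nat.factorial_zero, one_mul]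
      by_cases h : m = k
      · subst h; simp
      · rw [if_neg (fun hv : k = m => h hv.symm), if_neg (fun hv => h (Fin.ext hv))]
    | succ j ih =>
      intro k m
      rw [pow_succ, Matrix.mul_apply]
      by_cases hm : m.val = k.val + (j + 1)
      · -- only l with l.val = k.val + j contributes
        have hkj : k.val + j < n + 1 := by omega
        let l : Fin (n + 1) := ⟨k.val + j, hkj⟩
        rw [Finset.sum_eq_single l]
        · rw [ih, hT]
          have hlv : (l : ℕ) = k.val + j := rfl
          rw [hlv, if_pos rfl, if_pos (by omega), if_pos hm]
          have key : (j.factorial * Nat.choose (k.val + j) k.val) * (k.val + j + 1)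
              = (j + 1).factorial * Nat.choose (k.val + (j + 1)) k.val := by
            have hsy : Nat.choose (k.val + j) k.val = Nat.choose (k.val + j) j := by
              have := Nat.choose_symm (n := k.val + j) (k := j) (by omega)
              have h2 : k.val + j - j = k.val := by omega
              rw [h2] at this
              exact this
            have hsy2 : Nat.choose (k.val + (j + 1)) k.val
                = Nat.choose (k.val + j + 1) (j + 1) := by
              have := Nat.choose_symm (n := k.val + j + 1) (k := j + 1) (by omega)
              have h2 : k.val + j + 1 - (j + 1) = k.val := by omega
              rw [h2] at this
              have h3 : k.val + (j + 1) = k.val + j + 1 := by omega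
              rw [h3, this]
            have h3 := Nat.add_one_mul_choose_eq (k.val + j) j
            rw [hsy, hsy2, Nat.factorial_succ]
            calc j.factorial * Nat.choose (k.val + j) j * (k.val + j + 1)
                = j.factorial * (Nat.succ (k.val + j) * Nat.choose (k.val + j) j) := by
                  rw [Nat.succ_eq_add_one]; ring
              _ = j.factorial * (Nat.choose (k.val + j + 1) (j + 1) * (j + 1)) := by rw [h3]
              _ = (j + 1) * j.factorial * Nat.choose (k.val + j + 1) (j + 1) := by ring
          have hc := congrArg (fun x : ℕ => (x : ℂ)) key
          push_cast at hc ⊢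
          rw [hm]
          linear_combination hc
        · intro b _ hb
          rw [ih, hT]
          by_cases hb1 : b.val = k.val + j
          · exact absurd (Fin.ext hb1 : b = l) hb
          · rw [if_neg hb1, zero_mul]
        · intro h; exact absurd (Finset.mem_univ l) h
      · rw [if_neg hm]
        apply Finset.sum_eq_zero
        intro b _
        rw [ih, hT]
        by_cases hb1 : b.val = k.val + j
        · by_cases hb2 : m.val = b.val + 1
          · omega
          · rw [if_neg hb2, mul_zero]
        · rw [if_neg hb1, zero_mul]
  -- nilpotency: T^j = 0 for j ≥ n+1
  have hnil : ∀ j, n + 1 ≤ j → (T ^ j : Matrix (Fin (n+1)) (Fin (n+1)) ℂ) = 0 := by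
    intro j hj
    ext k m
    rw [hpow]
    rw [if_neg (by have := m.isLt; omega)]
    rfl
  -- exp as finite sum
  have hexp : NormedSpace.exp T = ∑ j ∈ Finset.range (n + 1), (j.factorial⁻¹ : ℂ) • T ^ j := by
    rw [NormedSpace.exp_eq_tsum (𝕂 := ℂ)]
    exact tsum_eq_sum (by
      intro j hj
      rw [hnil j (by simpa using hj), smul_zero])
  intro k m
  rw [hexp]
  have hsum : (∑ j ∈ Finset.range (n + 1), (j.factorial⁻¹ : ℂ) • T ^ j) k m
      = ∑ j ∈ Finset.range (n + 1), (j.factorial⁻¹ : ℂ) * (T ^ j) k m := by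
    rw [Matrix.sum_apply]
    exact Finset.sum_congr rfl fun j _ => rfl
  rw [hsum]
  by_cases hkm : k.val ≤ m.val
  · have hmem : m.val - k.val ∈ Finset.range (n + 1) := by
      simp; have := m.isLt; omega
    rw [Finset.sum_eq_single_of_mem (m.val - k.val) hmem]
    · rw [hpow, if_pos (by omega)]
      push_cast
      rw [← mul_assoc, inv_mul_cancel₀ (by exact_mod_cast Nat.factorial_ne_zero _), one_mul]
    · intro b _ hb
      rw [hpow, if_neg (by omega), mul_zero]
  · rw [Nat.choose_eq_zero_of_lt (by omega)]
    push_cast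
    apply Finset.sum_eq_zero
    intro b _
    rw [hpow, if_neg (by omega), mul_zero]
end

section
/- Let n ∈ ℕ and q ∈ ℂ, and for j ≥ 1 set (j)_q = 1 + q + … + q^{j-1} and (m)!_q = ∏_{j=1}^{m} (j)_q with (0)!_q = 1. Assume (j)_q ≠ 0 for all 1 ≤ j ≤ n. Let T_q be the (n+1)×(n+1) complex matrix with entries (T_q)_{k,k+1} = (k+1)_q for 0 ≤ k ≤ n-1 and all other entries 0. Then the matrix E = ∑_{m=0}^{n} (1/(m)!_q)·T_q^m (a finite sum, since T_q^{n+1} = 0) has entries E_{km} = C(m, k)_q for all k, m ∈ {0,…,n}. -/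
/-- The Gaussian ($q$-)binomial coefficient `C(n,k)_q`, defined by the recursion
`C(n+1,k)_q = C(n,k-1)_q + q^k * C(n,k)_q`, with `C(n,0)_q = C(n,n)_q = 1` and
`C(n,k)_q = 0` for `k > n`. -/
noncomputable def qBinom (q : ℂ) : ℕ → ℕ → ℂ
  | 0, 0 => 1
  | 0, _ + 1 => 0
  | _ + 1, 0 => 1
  | n + 1, k + 1 => qBinom q n k + q ^ (k + 1) * qBinom q n (k + 1)

/-- The matrix `σ₁(q,n)` with entries `σ₁(q,n)_{km} = C(n-k, n-m)_q`. -/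
noncomputable def sigma1 (q : ℂ) (n : ℕ) : Matrix (Fin (n + 1)) (Fin (n + 1)) ℂ :=
  fun k m => qBinom q (n - k.val) (n - m.val)

/-- The matrix `σ₂(q,n)` with entries
`σ₂(q,n)_{km} = (-1)^{k+m} q^{-(k-m)(k-m-1)/2} C(k,m)_{q⁻¹}` for `m ≤ k`, and `0` otherwise. -/
noncomputable def sigma2 (q : ℂ) (n : ℕ) : Matrix (Fin (n + 1)) (Fin (n + 1)) ℂ :=
  fun k m =>
    if m.val ≤ k.val then
      (-1 : ℂ) ^ (k.val + m.val) *
        q ^ (-(((k.val - m.val) * (k.val - m.val - 1) / 2 : ℕ) : ℤ)) *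
        qBinom q⁻¹ k.val m.val
    else 0

/-- The matrix `S(q)` with entries `S(q)_{km} = (-1)^k q^{-k(k-1)/2}` when `k+m = n`,
and `0` otherwise. -/
noncomputable def Smat (q : ℂ) (n : ℕ) : Matrix (Fin (n + 1)) (Fin (n + 1)) ℂ :=
  fun k m =>
    if k.val + m.val = n then (-1 : ℂ) ^ k.val * q ^ (-((k.val * (k.val - 1) / 2 : ℕ) : ℤ))
    else 0

/-- `A^♯`, the matrix with entries `(A^♯)_{ij} = A_{n-i, n-j}`. -/
noncomputable def msharp {n : ℕ} (A : Matrix (Fin (n + 1)) (Fin (n + 1)) ℂ) :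
    Matrix (Fin (n + 1)) (Fin (n + 1)) ℂ :=
  fun i j => A i.rev j.rev

/-- The `q`-integer `(j)_q = 1 + q + ⋯ + q^{j-1}`. -/
noncomputable def qInt (q : ℂ) (j : ℕ) : ℂ := ∑ i ∈ Finset.range j, q ^ i

/-- The `q`-factorial `(m)!_q = (1)_q (2)_q ⋯ (m)_q`, with `(0)!_q = 1`. -/
noncomputable def qFact (q : ℂ) (m : ℕ) : ℂ := ∏ j ∈ Finset.range m, qInt q (j + 1)

lemma qBinom_big (q : ℂ) : ∀ m k, m < k → qBinom q m k = 0 := by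
  intro m
  induction m with
  | zero =>
    intro k h
    obtain ⟨k, rfl⟩ : ∃ k', k = k' + 1 := ⟨k - 1, by omega⟩
    rfl
  | succ m ih =>
    intro k h
    obtain ⟨k, rfl⟩ : ∃ k', k = k' + 1 := ⟨k - 1, by omega⟩
    rw [show qBinom q (m+1) (k+1) = qBinom q m k + q ^ (k+1) * qBinom q m (k+1) from rfl,
      ih k (by omega), ih (k+1) (by omega)]
    ring

lemma qBinom_diag (q : ℂ) : ∀ m, qBinom q m m = 1 := by
  intro m
  induction m with
  | zero => rfl
  | succ m ih =>
    rw [show qBinom q (m+1) (m+1) = qBinom q m m + q ^ (m+1) * qBinom q m (m+1) from rfl,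
      ih, qBinom_big q m (m+1) (by omega)]
    ring

lemma qInt_add (q : ℂ) (a b : ℕ) : qInt q (a + b) = qInt q a + q ^ a * qInt q b := by
  simp [qInt, Finset.sum_range_add, pow_add, Finset.mul_sum]

lemma qFact_succ (q : ℂ) (m : ℕ) : qFact q (m + 1) = qFact q m * qInt q (m + 1) := by
  simp [qFact, Finset.prod_range_succ]

lemma qBinom_key (q : ℂ) : ∀ m k, k ≤ m →
    qBinom q m k * (qFact q k * qFact q (m - k)) = qFact q m := by
  intro m
  induction m with
  | zero => intro k h; interval_cases k; simp [qBinom, qFact]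
  | succ m ih =>
    intro k h
    rcases Nat.eq_zero_or_pos k with rfl | hk
    · simp [show qBinom q (m+1) 0 = 1 from rfl, qFact]
    obtain ⟨k, rfl⟩ : ∃ k', k = k' + 1 := ⟨k - 1, by omega⟩
    rcases eq_or_lt_of_le h with heq | hlt
    · rw [← heq, qBinom_diag, Nat.sub_self]
      simp [qFact]
    have hk1 : k + 1 ≤ m := by omega
    have ih1 := ih k (by omega)
    have ih2 := ih (k + 1) hk1
    have hfact : qFact q (m - k) = qFact q (m - (k + 1)) * qInt q (m - k) := by
      rw [show m - k = (m - (k+1)) + 1 by omega, qFact_succ, show m - (k+1) + 1 = m - k by omega]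
    have hqint : qInt q (m + 1) = qInt q (k + 1) + q ^ (k + 1) * qInt q (m - k) := by
      rw [show m + 1 = (k + 1) + (m - k) by omega, qInt_add]
    rw [hfact] at ih1
    rw [qFact_succ q k] at ih2
    rw [show qBinom q (m+1) (k+1) = qBinom q m k + q ^ (k+1) * qBinom q m (k+1) from rfl,
      show m + 1 - (k + 1) = m - k by omega, qFact_succ q m, qFact_succ q k, hqint, hfact]
    linear_combination qInt q (k+1) * ih1 + q ^ (k+1) * qInt q (m - k) * ih2

lemma pow_entry (n : ℕ) (q : ℂ) (Tq : Matrix (Fin (n + 1)) (Fin (n + 1)) ℂ)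
    (hT : ∀ k m : Fin (n + 1), Tq k m = if m.val = k.val + 1 then qInt q (k.val + 1) else 0)
    (i : ℕ) : ∀ k m : Fin (n + 1), (Tq ^ i) k m =
      if m.val = k.val + i then ∏ j ∈ Finset.range i, qInt q (k.val + 1 + j) else 0 := by
  induction i with
  | zero =>
    intro k m
    simp [Matrix.one_apply, Fin.ext_iff, eq_comm]
  | succ i ih =>
    intro k m
    rw [pow_succ', Matrix.mul_apply]
    by_cases hk : k.val < n
    · set k' : Fin (n + 1) := ⟨k.val + 1, by omega⟩ with hk'
      rw [Finset.sum_eq_single k']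
      · rw [hT k k', ih k' m]
        have hkv : k'.val = k.val + 1 := rfl
        rw [hkv, if_pos rfl]
        by_cases hm : m.val = k.val + (i + 1)
        · rw [if_pos (by omega), if_pos hm, Finset.prod_range_succ']
          have hp : ∀ j : ℕ, qInt q (k.val + 1 + (j + 1)) = qInt q (k.val + 1 + 1 + j) :=
            fun j => congrArg (qInt q) (by omega)
          simp only [hp]
          ring
        · rw [if_neg (by omega), if_neg (by omega), mul_zero]
      · intro x _ hne
        rw [hT k x, if_neg, zero_mul]
        intro hx
        have hkv : k'.val = k.val + 1 := rfl
        exact hne (Fin.ext (by rw [hkv]; exact hx))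
      · intro h; exact absurd (Finset.mem_univ k') h
    · have hkn : k.val = n := by omega
      have hz : ∀ x : Fin (n + 1), Tq k x = 0 := by
        intro x
        rw [hT]
        exact if_neg (by have := x.isLt; omega)
      simp only [hz, zero_mul, Finset.sum_const_zero]
      rw [if_neg (by have := m.isLt; omega)]

lemma qFact_add (q : ℂ) (a b : ℕ) :
    qFact q (a + b) = qFact q a * ∏ j ∈ Finset.range b, qInt q (a + 1 + j) := by
  rw [qFact, Finset.prod_range_add, ← qFact]
  congr 1
  exact Finset.prod_congr rfl fun j _ => congrArg (qInt q) (by omega)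

lemma qFact_ne_zero (n : ℕ) (q : ℂ) (hq : ∀ j : ℕ, 1 ≤ j → j ≤ n → qInt q j ≠ 0)
    (i : ℕ) (hi : i ≤ n) : qFact q i ≠ 0 := by
  rw [qFact]
  exact Finset.prod_ne_zero_iff.2 fun j hj =>
    hq (j + 1) (by omega) (by have := Finset.mem_range.1 hj; omega)

/-- If `(j)_q ≠ 0` for `1 ≤ j ≤ n` and `T_q` is the matrix with
superdiagonal entries `(T_q)_{k,k+1} = (k+1)_q` and zeros elsewhere, then the finite
`q`-exponential sum `E = ∑_{m=0}^n (1/(m)!_q) T_q^m` has entries `E_{km} = C(m,k)_q`. -/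
theorem qExp_superdiagonal_eq_qPascal (n : ℕ) (q : ℂ)
    (hq : ∀ j : ℕ, 1 ≤ j → j ≤ n → qInt q j ≠ 0)
    (Tq : Matrix (Fin (n + 1)) (Fin (n + 1)) ℂ)
    (hT : ∀ k m : Fin (n + 1), Tq k m = if m.val = k.val + 1 then qInt q (k.val + 1) else 0) :
    ∀ k m : Fin (n + 1),
      (∑ i ∈ Finset.range (n + 1), (qFact q i)⁻¹ • Tq ^ i) k m = qBinom q m.val k.val := by
  intro k m
  simp only [Matrix.sum_apply, Matrix.smul_apply, smul_eq_mul]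
  have hpe := pow_entry n q Tq hT
  by_cases h : k.val ≤ m.val
  · rw [Finset.sum_eq_single (m.val - k.val)]
    · rw [hpe, if_pos (by omega)]
      have hfm : qFact q k.val * ∏ j ∈ Finset.range (m.val - k.val), qInt q (k.val + 1 + j)
          = qFact q m.val := by
        rw [← qFact_add]
        congr 1
        omega
      have hA := qBinom_key q m.val k.val h
      have h1 : qFact q k.val ≠ 0 := qFact_ne_zero n q hq _ (by omega)
      have h2 : qFact q (m.val - k.val) ≠ 0 := qFact_ne_zero n q hq _ (by have := m.isLt; omega)
      field_simp
      apply mul_left_cancel₀ h1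
      linear_combination hfm - hA
    · intro i hi hne
      rw [hpe, if_neg (by omega), mul_zero]
    · intro habs
      exact absurd (Finset.mem_range.2 (by have := m.isLt; omega)) habs
  · rw [qBinom_big q m.val k.val (by omega)]
    apply Finset.sum_eq_zero
    intro i _
    rw [hpe, if_neg (by omega), mul_zero]
end

section
/- Let λ₀, λ₁ ∈ ℂ be nonzero and consider the 2×2 complex matrices A = [[λ₀, λ₁],[0, λ₁]] and B = [[λ₁, 0],[-λ₀, λ₀]]. There exists a ℂ-subspace W of ℂ² with W ≠ 0 and W ≠ ℂ² that is invariant under both linear maps x ↦ A·x and x ↦ B·x if and only if λ₀² − λ₀·λ₁ + λ₁² = 0 (equivalently, λ₁ = α·λ₀ with α² − α + 1 = 0). -/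
/-- If a submodule of `ℂ²` contains two vectors with nonzero determinant, it is `⊤`. -/
lemma span_top_of_det_ne {W : Submodule ℂ (Fin 2 → ℂ)} {v w : Fin 2 → ℂ}
    (hv : v ∈ W) (hw : w ∈ W) (hd : v 0 * w 1 - v 1 * w 0 ≠ 0) : W = ⊤ := by
  rw [Submodule.eq_top_iff']
  intro x
  have hx : x = ((x 0 * w 1 - x 1 * w 0) / (v 0 * w 1 - v 1 * w 0)) • v
      + ((v 0 * x 1 - v 1 * x 0) / (v 0 * w 1 - v 1 * w 0)) • w := by
    funext i
    have hd' : w 1 * v 0 - w 0 * v 1 ≠ 0 := by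
      intro h; apply hd; linear_combination h
    fin_cases i <;> simp [Pi.smul_apply] <;> field_simp [hd'] <;> ring
  rw [hx]
  exact W.add_mem (W.smul_mem _ hv) (W.smul_mem _ hw)

/-- For nonzero `λ₀, λ₁ ∈ ℂ`, the matrices `A = [[λ₀, λ₁],[0, λ₁]]` and
`B = [[λ₁, 0],[-λ₀, λ₀]]` admit a common nontrivial invariant subspace of `ℂ²` if and
only if `λ₀² - λ₀ λ₁ + λ₁² = 0`. -/
theorem dim2_reducible_iff (lam0 lam1 : ℂ) (h0 : lam0 ≠ 0) (h1 : lam1 ≠ 0) :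
    (∃ W : Submodule ℂ (Fin 2 → ℂ), W ≠ ⊥ ∧ W ≠ ⊤ ∧
      (∀ x ∈ W, (!![lam0, lam1; 0, lam1]).mulVec x ∈ W) ∧
      (∀ x ∈ W, (!![lam1, 0; -lam0, lam0]).mulVec x ∈ W)) ↔
      lam0 ^ 2 - lam0 * lam1 + lam1 ^ 2 = 0 := by
  constructor
  · rintro ⟨W, hbot, htop, hA, hB⟩
    obtain ⟨v, hv, hv0⟩ := Submodule.exists_mem_ne_zero_of_ne_bot hbot
    set a := v 0 with ha
    set b := v 1 with hb
    have hAW := hA v hv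
    have hBW := hB v hv
    have hAv : (!![lam0, lam1; 0, lam1]).mulVec v = ![lam0 * a + lam1 * b, lam1 * b] := by
      funext i; fin_cases i <;>
        simp [Matrix.mulVec, dotProduct, Fin.sum_univ_two, ← ha, ← hb]
    have hBv : (!![lam1, 0; -lam0, lam0]).mulVec v = ![lam1 * a, -lam0 * a + lam0 * b] := by
      funext i; fin_cases i <;>
        simp [Matrix.mulVec, dotProduct, Fin.sum_univ_two, ← ha, ← hb] <;> ring
    rw [hAv] at hAW
    rw [hBv] at hBW
    -- determinants must vanish
    have e1 : a * (lam1 * b) - b * (lam0 * a + lam1 * b) = 0 := by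
      by_contra h
      exact htop (span_top_of_det_ne hv hAW (by simpa using h))
    have e2 : a * (-lam0 * a + lam0 * b) - b * (lam1 * a) = 0 := by
      by_contra h
      exact htop (span_top_of_det_ne hv hBW (by simpa using h))
    have hb0 : b ≠ 0 := by
      intro hb0
      apply hv0
      have ha0 : a = 0 := by
        have : lam0 * a ^ 2 = 0 := by linear_combination -e2 + ((lam0 - lam1)*a) * hb0
        have := mul_eq_zero.mp this
        rcases this with h | h
        · exact absurd h h0
        · exact pow_eq_zero_iff (by norm_num) |>.mp h
      funext i; fin_cases i
      · exact ha0
      · exact hb0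
    have ha0 : a ≠ 0 := by
      intro ha0
      have : lam1 * b ^ 2 = 0 := by linear_combination -e1 + ((lam1 - lam0)*b) * ha0
      rcases mul_eq_zero.mp this with h | h
      · exact h1 h
      · exact hb0 (pow_eq_zero_iff (by norm_num) |>.mp h)
    -- cancel b in e1 and a in e2
    have f1 : a * (lam1 - lam0) = lam1 * b :=
      mul_left_cancel₀ hb0 (by linear_combination e1)
    have f2 : lam0 * a = (lam0 - lam1) * b :=
      mul_left_cancel₀ ha0 (by linear_combination -e2)
    have hab : a * b ≠ 0 := mul_ne_zero ha0 hb0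
    have key : (lam0 ^ 2 - lam0 * lam1 + lam1 ^ 2) * (b * b) = 0 := by
      linear_combination ((lam1 - lam0)*b) * f2 - (lam0*b) * f1
    rcases mul_eq_zero.mp key with h | h
    · exact h
    · exact absurd h (mul_ne_zero hb0 hb0)
  · intro heq
    have hne : lam1 - lam0 ≠ 0 := by
      intro h
      have : lam1 = lam0 := by linear_combination h
      apply h0
      have : lam0 ^ 2 = 0 := by linear_combination heq + (lam0 - lam1) * this - lam0 * this + lam1*this - lam1*this
      exact pow_eq_zero_iff (by norm_num) |>.mp this
    set v : Fin 2 → ℂ := ![lam1, lam1 - lam0] with hvdef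
    refine ⟨Submodule.span ℂ {v}, ?_, ?_, ?_, ?_⟩
    · rw [Ne, Submodule.span_singleton_eq_bot]
      intro h
      apply h1
      have := congrFun h 0
      simpa [hvdef] using this
    · intro h
      have : (![1, 0] : Fin 2 → ℂ) ∈ Submodule.span ℂ {v} := h ▸ Submodule.mem_top
      obtain ⟨c, hc⟩ := Submodule.mem_span_singleton.mp this
      have h0' := congrFun hc 0
      have h1' := congrFun hc 1
      simp [hvdef] at h0' h1'
      rcases h1' with h | h
      · rw [h] at h0'; simp at h0'
      · exact hne h
    · intro x hx
      obtain ⟨c, hc⟩ := Submodule.mem_span_singleton.mp hx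
      rw [← hc]
      have : (!![lam0, lam1; 0, lam1]).mulVec (c • v) = (c * lam1) • v := by
        funext i; fin_cases i <;>
          simp [Matrix.mulVec, dotProduct, Fin.sum_univ_two, hvdef] <;> ring
      rw [this]
      exact Submodule.smul_mem _ _ (Submodule.mem_span_singleton_self v)
    · intro x hx
      obtain ⟨c, hc⟩ := Submodule.mem_span_singleton.mp hx
      rw [← hc]
      have : (!![lam1, 0; -lam0, lam0]).mulVec (c • v) = (c * lam1) • v := by
        funext i; fin_cases i <;>
          simp [Matrix.mulVec, dotProduct, Fin.sum_univ_two, hvdef]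
        · ring
        · linear_combination (-c) * heq
      rw [this]
      exact Submodule.smul_mem _ _ (Submodule.mem_span_singleton_self v)
end

section
/- Let n ∈ ℕ with n ≥ 1, let σ₁ and σ₂ be the (n+1)×(n+1) complex matrices with entries σ₁_{km} = binom(n-k, n-m) and σ₂_{km} = (-1)^{k+m}·binom(k, m), and let Λ be the diagonal matrix with diagonal entries (-1)^k, k = 0,…,n (so that Λ^♯, the matrix with (Λ^♯)_{ij} = Λ_{n-i,n-j}, is diagonal with entries (-1)^{n-k}). Define e ∈ ℂ^{n+1} by: if n is even, e_0 = e_n = 2 and e_k = 1 for 0 < k < n; if n is odd, e_0 = e_n = 0 and e_k = 1 for 0 < k < n. Then (σ₁·Λ)·e = e and (Λ^♯·σ₂)·e = e; in particular, for n ≥ 2 the span of e is a nonzero proper common invariant subspace of σ₁·Λ and Λ^♯·σ₂. -/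
lemma alt_sum_choose (N : ℕ) :
    ∑ j ∈ Finset.range (N + 1), (-1 : ℂ) ^ j * (N.choose j : ℂ) =
      if N = 0 then 1 else 0 := by
  have h := Int.alternating_sum_range_choose (n := N)
  have h2 : ((∑ i ∈ Finset.range (N + 1), (-1 : ℤ) ^ i * N.choose i : ℤ) : ℂ)
      = ((if N = 0 then 1 else 0 : ℤ) : ℂ) := by rw [h]
  push_cast at h2
  exact h2

lemma alt_sum_choose_trunc {k n : ℕ} (hk : k ≤ n) :
    ∑ m ∈ Finset.range (n + 1), (-1 : ℂ) ^ m * (k.choose m : ℂ) =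
      if k = 0 then 1 else 0 := by
  rw [← alt_sum_choose k]
  refine (Finset.sum_subset (Finset.range_subset_range.2 (by omega)) ?_).symm
  intro m hm hm'
  have : k < m := by simp only [Finset.mem_range] at hm hm'; omega
  rw [Nat.choose_eq_zero_of_lt this]; simp

lemma alt_sum_choose_rev {k n : ℕ} (hk : k ≤ n) :
    ∑ m ∈ Finset.range (n + 1), (-1 : ℂ) ^ m * ((n - k).choose (n - m) : ℂ) =
      if k = n then (-1 : ℂ) ^ n else 0 := by
  rw [← Finset.sum_range_reflect]
  have step : ∀ j ∈ Finset.range (n + 1),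
      (-1 : ℂ) ^ (n + 1 - 1 - j) * ((n - k).choose (n - (n + 1 - 1 - j)) : ℂ)
        = (-1 : ℂ) ^ n * ((-1 : ℂ) ^ j * ((n - k).choose j : ℂ)) := by
    intro j hj
    have hj' : j ≤ n := by simpa [Nat.lt_succ_iff] using hj
    have h1 : n + 1 - 1 - j = n - j := by omega
    have h2 : n - (n - j) = j := by omega
    have h3 : (-1 : ℂ) ^ (n - j) = (-1 : ℂ) ^ n * (-1 : ℂ) ^ j := by
      have h4 : (-1 : ℂ) ^ n * (-1 : ℂ) ^ j = (-1 : ℂ) ^ (n + j) := by rw [pow_add]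
      rw [h4, show n + j = (n - j) + 2 * j by omega, pow_add, pow_mul]
      simp
    rw [h1, h2, h3]; ring
  rw [Finset.sum_congr rfl step, ← Finset.mul_sum, alt_sum_choose_trunc (by omega : n - k ≤ n)]
  have : n - k = 0 ↔ k = n := by omega
  split_ifs with h1 h2 h2 <;> simp_all

/-- For `n ≥ 1`, `Λ = diag((-1)^k)` and the vector `e` with
`e_0 = e_n = 2` (resp. `0`) and middle entries `1` for `n` even (resp. odd), we have
`(σ₁ Λ) e = e` and `(Λ^♯ σ₂) e = e`; in particular, for `n ≥ 2` the span of `e` is a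
nonzero proper common invariant subspace of `σ₁ Λ` and `Λ^♯ σ₂`. -/
theorem alternating_lambda_common_eigenvector (n : ℕ) (hn : 1 ≤ n)
    (σ1 σ2 : Matrix (Fin (n + 1)) (Fin (n + 1)) ℂ)
    (hσ1 : ∀ k m : Fin (n + 1), σ1 k m = (Nat.choose (n - k.val) (n - m.val) : ℂ))
    (hσ2 : ∀ k m : Fin (n + 1),
      σ2 k m = (-1 : ℂ) ^ (k.val + m.val) * (Nat.choose k.val m.val : ℂ))
    (Λ : Matrix (Fin (n + 1)) (Fin (n + 1)) ℂ)
    (hΛ : Λ = Matrix.diagonal (fun k : Fin (n + 1) => (-1 : ℂ) ^ k.val))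
    (e : Fin (n + 1) → ℂ)
    (he : ∀ k : Fin (n + 1),
      e k = if k.val = 0 ∨ k.val = n then (if Even n then 2 else 0) else 1) :
    (σ1 * Λ).mulVec e = e ∧ (msharp Λ * σ2).mulVec e = e ∧
      (2 ≤ n →
        Submodule.span ℂ {e} ≠ ⊥ ∧ Submodule.span ℂ {e} ≠ ⊤ ∧
        ∀ x ∈ Submodule.span ℂ {e},
          (σ1 * Λ).mulVec x ∈ Submodule.span ℂ {e} ∧
            (msharp Λ * σ2).mulVec x ∈ Submodule.span ℂ {e}) := by
  subst hΛ
  set ε : ℂ := if Even n then 1 else -1 with hε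
  have hε2 : ε * ε = 1 := by rw [hε]; split_ifs <;> norm_num
  have hepow : (-1 : ℂ) ^ n = ε := by
    rw [hε]; split_ifs with h
    · exact h.neg_one_pow
    · exact (Nat.not_even_iff_odd.mp h).neg_one_pow
  have he' : ∀ m : Fin (n + 1), e m =
      1 + ε * (if m.val = 0 then 1 else 0) + ε * (if m.val = n then 1 else 0) := by
    intro m
    rw [he m, hε]
    by_cases h0 : m.val = 0 <;> by_cases h1 : m.val = n <;>
      split_ifs <;> simp_all <;> norm_num
  have hcn : ∀ k : Fin (n + 1), ((n - k.val).choose n : ℂ) =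
      if k.val = 0 then 1 else 0 := by
    intro k
    split_ifs with h
    · rw [h]; simp
    · rw [Nat.choose_eq_zero_of_lt (by omega)]; simp
  have hckn : ∀ k : Fin (n + 1), (k.val.choose n : ℂ) =
      if k.val = n then 1 else 0 := by
    intro k
    split_ifs with h
    · rw [h]; simp
    · rw [Nat.choose_eq_zero_of_lt (by omega)]; simp
  have hms : msharp (Matrix.diagonal (fun k : Fin (n + 1) => (-1 : ℂ) ^ k.val)) =
      Matrix.diagonal (fun k : Fin (n + 1) => (-1 : ℂ) ^ (n - k.val)) := by
    funext i j
    by_cases h : i = j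
    · subst h
      simp [msharp, Matrix.diagonal_apply_eq, Fin.val_rev]
    · rw [msharp, Matrix.diagonal_apply_ne _ (fun hc => h (Fin.rev_inj.mp hc)),
        Matrix.diagonal_apply_ne _ h]
  have eig1 : (σ1 * Matrix.diagonal (fun k : Fin (n + 1) => (-1 : ℂ) ^ k.val)).mulVec e = e := by
    funext k
    have hk : k.val ≤ n := by omega
    calc (σ1 * Matrix.diagonal (fun k : Fin (n + 1) => (-1 : ℂ) ^ k.val)).mulVec e k
        = ∑ m : Fin (n + 1), ((-1 : ℂ) ^ m.val * ((n - k.val).choose (n - m.val) : ℂ)) *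
            (1 + ε * (if m.val = 0 then 1 else 0) + ε * (if m.val = n then 1 else 0)) := by
          simp only [Matrix.mulVec, dotProduct, Matrix.mul_diagonal, hσ1]
          exact Finset.sum_congr rfl fun m _ => by rw [he' m]; ring
      _ = ∑ m ∈ Finset.range (n + 1), ((-1 : ℂ) ^ m * ((n - k.val).choose (n - m) : ℂ)) *
            (1 + ε * (if m = 0 then 1 else 0) + ε * (if m = n then 1 else 0)) :=
          Fin.sum_univ_eq_sum_range (fun m => ((-1 : ℂ) ^ m * ((n - k.val).choose (n - m) : ℂ)) *
            (1 + ε * (if m = 0 then 1 else 0) + ε * (if m = n then 1 else 0))) (n + 1)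
      _ = (∑ m ∈ Finset.range (n + 1), (-1 : ℂ) ^ m * ((n - k.val).choose (n - m) : ℂ))
          + (∑ m ∈ Finset.range (n + 1), if m = 0 then
              ε * ((-1 : ℂ) ^ m * ((n - k.val).choose (n - m) : ℂ)) else 0)
          + (∑ m ∈ Finset.range (n + 1), if m = n then
              ε * ((-1 : ℂ) ^ m * ((n - k.val).choose (n - m) : ℂ)) else 0) := by
          rw [← Finset.sum_add_distrib, ← Finset.sum_add_distrib]
          exact Finset.sum_congr rfl fun m _ => by split_ifs <;> ring
      _ = e k := by
          rw [alt_sum_choose_rev hk, Finset.sum_ite_eq' (Finset.range (n + 1)) 0,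
            Finset.sum_ite_eq' (Finset.range (n + 1)) n, he' k]
          simp only [Finset.mem_range, Nat.lt_succ_iff, Nat.zero_le, Nat.le_refl, if_true,
            pow_zero, Nat.sub_zero, Nat.sub_self, Nat.choose_zero_right, Nat.cast_one,
            hcn k, hepow]
          split_ifs <;> linear_combination hε2
  have eig2 : (msharp (Matrix.diagonal (fun k : Fin (n + 1) => (-1 : ℂ) ^ k.val)) * σ2).mulVec e
      = e := by
    rw [hms]
    funext k
    have hk : k.val ≤ n := by omega
    have hfac : ∀ m : Fin (n + 1),
        (-1 : ℂ) ^ (n - k.val) * ((-1 : ℂ) ^ (k.val + m.val)) = ε * (-1 : ℂ) ^ m.val := by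
      intro m
      rw [← pow_add, show n - k.val + (k.val + m.val) = n + m.val by omega, pow_add, hepow]
    calc (Matrix.diagonal (fun k : Fin (n + 1) => (-1 : ℂ) ^ (n - k.val)) * σ2).mulVec e k
        = ∑ m : Fin (n + 1), (ε * ((-1 : ℂ) ^ m.val * (k.val.choose m.val : ℂ))) *
            (1 + ε * (if m.val = 0 then 1 else 0) + ε * (if m.val = n then 1 else 0)) := by
          simp only [Matrix.mulVec, dotProduct, Matrix.diagonal_mul, hσ2]
          refine Finset.sum_congr rfl fun m _ => ?_
          rw [he' m, ← mul_assoc, hfac m]; ring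
      _ = ∑ m ∈ Finset.range (n + 1), (ε * ((-1 : ℂ) ^ m * (k.val.choose m : ℂ))) *
            (1 + ε * (if m = 0 then 1 else 0) + ε * (if m = n then 1 else 0)) :=
          Fin.sum_univ_eq_sum_range (fun m => (ε * ((-1 : ℂ) ^ m * (k.val.choose m : ℂ))) *
            (1 + ε * (if m = 0 then 1 else 0) + ε * (if m = n then 1 else 0))) (n + 1)
      _ = ε * (∑ m ∈ Finset.range (n + 1), (-1 : ℂ) ^ m * (k.val.choose m : ℂ))
          + (∑ m ∈ Finset.range (n + 1), if m = 0 then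
              ε * (ε * ((-1 : ℂ) ^ m * (k.val.choose m : ℂ))) else 0)
          + (∑ m ∈ Finset.range (n + 1), if m = n then
              ε * (ε * ((-1 : ℂ) ^ m * (k.val.choose m : ℂ))) else 0) := by
          rw [Finset.mul_sum, ← Finset.sum_add_distrib, ← Finset.sum_add_distrib]
          exact Finset.sum_congr rfl fun m _ => by split_ifs <;> ring
      _ = e k := by
          rw [alt_sum_choose_trunc hk, Finset.sum_ite_eq' (Finset.range (n + 1)) 0,
            Finset.sum_ite_eq' (Finset.range (n + 1)) n, he' k]
          simp only [Finset.mem_range, Nat.lt_succ_iff, Nat.zero_le, Nat.le_refl, if_true,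
            pow_zero, Nat.choose_zero_right, Nat.cast_one, hckn k, hepow]
          split_ifs <;> first
            | linear_combination (1 + ε) * hε2
            | linear_combination (-ε) * hε2
            | linear_combination hε2
  refine ⟨eig1, eig2, fun hn2 => ?_⟩
  have he1 : e ⟨1, by omega⟩ = 1 := by
    rw [he]; simp only [Fin.val_mk]
    rw [if_neg (by omega)]
  constructor
  · rw [Ne, Submodule.span_singleton_eq_bot]
    intro h
    have := congrFun h ⟨1, by omega⟩
    rw [he1] at this
    simp at this
  constructor
  · intro h
    have hmem : Pi.single (0 : Fin (n + 1)) (1 : ℂ) ∈ Submodule.span ℂ {e} := by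
      rw [h]; trivial
    rw [Submodule.mem_span_singleton] at hmem
    obtain ⟨c, hc⟩ := hmem
    have h1 := congrFun hc ⟨1, by omega⟩
    have h0 := congrFun hc 0
    simp only [Pi.smul_apply, smul_eq_mul] at h1 h0
    rw [he1] at h1
    simp only [Pi.single_apply, Fin.ext_iff, Fin.val_mk, Fin.val_zero, if_true] at h1 h0
    rw [if_neg (by omega)] at h1
    have hc0 : c = 0 := by simpa using h1
    rw [hc0, zero_mul] at h0
    exact zero_ne_one h0
  · intro x hx
    rw [Submodule.mem_span_singleton] at hx
    obtain ⟨c, hc⟩ := hx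
    subst hc
    rw [Matrix.mulVec_smul, Matrix.mulVec_smul, eig1, eig2]
    exact ⟨Submodule.smul_mem _ c (Submodule.mem_span_singleton_self e),
      Submodule.smul_mem _ c (Submodule.mem_span_singleton_self e)⟩
end

section
/- Let n ∈ ℕ, let α ∈ ℂ with α ≠ 0 and α ≠ 1, let σ₁ and σ₂ be the (n+1)×(n+1) complex matrices with entries σ₁_{km} = binom(n-k, n-m) and σ₂_{km} = (-1)^{k+m}·binom(k, m), and let Λ(α) be the diagonal matrix with diagonal entries α^{n-k}, k = 0,…,n. Then: (1) the vector e ∈ ℂ^{n+1} with e_k = (1-α)^{-(n-k)} satisfies (σ₁·Λ(α))·e = e; and (2) the vector f ∈ ℂ^{n+1} with f_k = (1-α^{-1})^{n-k} satisfies (Λ(α)^♯·σ₂)·f = f, where Λ(α)^♯ is the diagonal matrix with entries α^{k}, k = 0,…,n. -/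
lemma aux_sum_choose (n K : ℕ) (hK : K ≤ n) (x : ℂ) :
    ∑ j ∈ Finset.range (n + 1), (K.choose j : ℂ) * x ^ j = (x + 1) ^ K := by
  rw [add_pow]
  rw [Finset.sum_subset (Finset.range_subset_range.2 (Nat.succ_le_succ hK))
    (fun j _ hj => by
      have : K < j := by simpa using hj
      simp [Nat.choose_eq_zero_of_lt this])]
  exact Finset.sum_congr rfl fun j _ => by ring

lemma aux_sum_alt (n k : ℕ) (hk : k ≤ n) (γ : ℂ) :
    ∑ m ∈ Finset.range (n + 1),
      (-1 : ℂ) ^ (k + m) * (k.choose m : ℂ) * γ ^ (n - m)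
      = γ ^ (n - k) * (1 - γ) ^ k := by
  rw [← Finset.sum_subset (Finset.range_subset_range.2 (Nat.succ_le_succ hk))
    (fun m _ hm => by
      have : k < m := by simpa using hm
      simp [Nat.choose_eq_zero_of_lt this])]
  have h0 : (1 - γ) ^ k = (1 + (-γ)) ^ k := by ring_nf
  rw [h0, add_pow, Finset.mul_sum]
  refine Finset.sum_congr rfl fun m hm => ?_
  have hmk : m ≤ k := by simpa [Nat.lt_succ_iff] using hm
  have h1 : k + m = (k - m) + 2 * m := by omega
  have h2 : n - m = (n - k) + (k - m) := by omega
  rw [h1, h2, pow_add, pow_add, pow_mul, neg_pow γ (k - m)]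
  simp
  ring

/-- For `α ≠ 0, 1` and `Λ(α) = diag(α^{n-k})`:
(1) the vector `e_k = (1-α)^{-(n-k)}` satisfies `(σ₁ Λ(α)) e = e`; and
(2) the vector `f_k = (1-α⁻¹)^{n-k}` satisfies `(Λ(α)^♯ σ₂) f = f`, where
`Λ(α)^♯ = diag(α^k)`. -/
theorem general_lambda_eigenvectors (n : ℕ) (α : ℂ) (hα0 : α ≠ 0) (hα1 : α ≠ 1)
    (σ1 σ2 : Matrix (Fin (n + 1)) (Fin (n + 1)) ℂ)
    (hσ1 : ∀ k m : Fin (n + 1), σ1 k m = (Nat.choose (n - k.val) (n - m.val) : ℂ))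
    (hσ2 : ∀ k m : Fin (n + 1),
      σ2 k m = (-1 : ℂ) ^ (k.val + m.val) * (Nat.choose k.val m.val : ℂ))
    (e f : Fin (n + 1) → ℂ)
    (he : ∀ k : Fin (n + 1), e k = ((1 - α) ^ (n - k.val))⁻¹)
    (hf : ∀ k : Fin (n + 1), f k = (1 - α⁻¹) ^ (n - k.val)) :
    (σ1 * Matrix.diagonal (fun k : Fin (n + 1) => α ^ (n - k.val))).mulVec e = e ∧
      (Matrix.diagonal (fun k : Fin (n + 1) => α ^ k.val) * σ2).mulVec f = f := by
  have hβ : (1 : ℂ) - α ≠ 0 := sub_ne_zero.2 (fun h => hα1 h.symm)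
  constructor
  · funext k
    rw [← Matrix.mulVec_mulVec]
    have hin : (Matrix.diagonal fun m : Fin (n + 1) => α ^ (n - m.val)).mulVec e
        = fun m : Fin (n + 1) => α ^ (n - m.val) * ((1 - α) ^ (n - m.val))⁻¹ :=
      funext fun m => by rw [Matrix.mulVec_diagonal, he]
    rw [hin]
    simp only [Matrix.mulVec, dotProduct, hσ1]
    rw [Fin.sum_univ_eq_sum_range
      (fun m => ((Nat.choose (n - k.val) (n - m) : ℂ)) *
        (α ^ (n - m) * ((1 - α) ^ (n - m))⁻¹)) (n + 1)]
    rw [← Finset.sum_range_reflect]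
    have hstep : ∀ j ∈ Finset.range (n + 1),
        ((Nat.choose (n - k.val) (n - (n + 1 - 1 - j)) : ℂ)) *
          (α ^ (n - (n + 1 - 1 - j)) * ((1 - α) ^ (n - (n + 1 - 1 - j)))⁻¹)
        = ((Nat.choose (n - k.val) j : ℂ)) * (α * (1 - α)⁻¹) ^ j := by
      intro j hj
      have hjn : j ≤ n := by simpa [Nat.lt_succ_iff] using hj
      have : n - (n + 1 - 1 - j) = j := by omega
      rw [this, mul_pow, inv_pow]
    rw [Finset.sum_congr rfl hstep, aux_sum_choose n (n - k.val) (Nat.sub_le n k.val)]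
    have hkey : α * (1 - α)⁻¹ + 1 = (1 - α)⁻¹ := by field_simp; ring
    rw [hkey, inv_pow, he]
  · funext k
    simp only [Matrix.mulVec, dotProduct, Matrix.diagonal_mul, hσ2, hf]
    rw [Fin.sum_univ_eq_sum_range
      (fun m => α ^ k.val * ((-1 : ℂ) ^ (k.val + m) * (Nat.choose k.val m : ℂ)) *
        (1 - α⁻¹) ^ (n - m)) (n + 1)]
    have hre : ∀ m ∈ Finset.range (n + 1),
        α ^ k.val * ((-1 : ℂ) ^ (k.val + m) * (Nat.choose k.val m : ℂ)) *
          (1 - α⁻¹) ^ (n - m)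
        = α ^ k.val * ((-1 : ℂ) ^ (k.val + m) * (Nat.choose k.val m : ℂ) *
          (1 - α⁻¹) ^ (n - m)) := fun m _ => by ring
    rw [Finset.sum_congr rfl hre, ← Finset.mul_sum,
      aux_sum_alt n k.val (Nat.lt_succ_iff.mp k.isLt) (1 - α⁻¹)]
    have h1 : (1 : ℂ) - (1 - α⁻¹) = α⁻¹ := by ring
    rw [h1]
    have h2 : α ^ k.val * (α⁻¹) ^ k.val = 1 := by
      rw [← mul_pow, mul_inv_cancel₀ hα0, one_pow]
    calc α ^ k.val * ((1 - α⁻¹) ^ (n - k.val) * (α⁻¹) ^ k.val)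
        = (α ^ k.val * (α⁻¹) ^ k.val) * (1 - α⁻¹) ^ (n - k.val) := by ring
      _ = (1 - α⁻¹) ^ (n - k.val) := by rw [h2, one_mul]
end
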